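/- Let f : I → ℝ be a measurable function that is bounded on every compact subinterval of I. Let φ_n (n ∈ ℕ) and φ be dynamic test functions such that the functions t ↦ φ_n(t)(0) and t ↦ φ(t)(0) are measurable on I, and φ_n → φ in 𝒯. Then ∫_I f(t) φ_n(t)(0) dt → ∫_I f(t) φ(t)(0) dt as n → ∞. That is, the regular distribution associated to f, defined by (f, φ) = ∫_I f(t) φ̂(t) dt where φ̂ is the ordinary part of the test function, is a 𝒯-sequentially continuous functional. -/

import Mathlib

open Set Filter Topology MeasureTheory

noncomputable section

/-- `J = [-1/2, 1/2]`. -/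
def Jset : Set ℝ := Set.Icc (-(1:ℝ)/2) (1/2)

/-- A dynamic function `f` on `I = (a,b)` tends to `c` from the right at `τ`
(uniformly in `s ∈ J`). -/
def RightLim (a b : ℝ) (f : ℝ → ℝ → ℝ) (τ c : ℝ) : Prop :=
  ∀ ε > 0, ∃ η > 0, ∀ t ∈ Set.Ioo a b, t ∈ Set.Ioo τ (τ + η) → ∀ s ∈ Jset, |f t s - c| < ε

/-- A dynamic function `f` on `I = (a,b)` tends to `c` from the left at `τ`
(uniformly in `s ∈ J`). -/
def LeftLim (a b : ℝ) (f : ℝ → ℝ → ℝ) (τ c : ℝ) : Prop :=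
  ∀ ε > 0, ∃ η > 0, ∀ t ∈ Set.Ioo a b, t ∈ Set.Ioo (τ - η) τ → ∀ s ∈ Jset, |f t s - c| < ε

/-- `f` is bounded on `I × J`. -/
def BddOn (a b : ℝ) (f : ℝ → ℝ → ℝ) : Prop :=
  ∃ M, ∀ t ∈ Set.Ioo a b, ∀ s ∈ Jset, |f t s| ≤ M

/-- The one-sided uniform limits of `f` exist at every point of `I = (a,b)`. -/
def HasSidedLimits (a b : ℝ) (f : ℝ → ℝ → ℝ) : Prop :=
  ∀ τ ∈ Set.Ioo a b, (∃ c, RightLim a b f τ c) ∧ (∃ c, LeftLim a b f τ c)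

/-- The support of the dynamic function `f` is contained in the compact
interval `[c,d] ⊂ (a,b)`. -/
def SuppIn (a b : ℝ) (f : ℝ → ℝ → ℝ) (c d : ℝ) : Prop :=
  a < c ∧ c ≤ d ∧ d < b ∧ ∀ t ∉ Set.Icc c d, ∀ s ∈ Jset, f t s = 0

/-- `φ` is a dynamic test function on `I = (a,b)`. -/
def IsDynTest (a b : ℝ) (φ : ℝ → ℝ → ℝ) : Prop :=
  BddOn a b φ ∧ HasSidedLimits a b φ ∧ ∃ c d, SuppIn a b φ c d

/-- Convergence of a sequence of dynamic test functions in the space `𝒯`: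
common compact support in `I` and uniform convergence on `I × J`. -/
def TendstoT (a b : ℝ) (φn : ℕ → ℝ → ℝ → ℝ) (φ : ℝ → ℝ → ℝ) : Prop :=
  (∃ c d, a < c ∧ c ≤ d ∧ d < b ∧ ∀ n, ∀ t ∉ Set.Icc c d, ∀ s ∈ Jset, φn n t s = 0) ∧
  ∀ ε > 0, ∃ N, ∀ n ≥ N, ∀ t ∈ Set.Ioo a b, ∀ s ∈ Jset, |φn n t s - φ t s| < ε

/-- A functional on dynamic functions is `𝒯`-sequentially continuous. -/
def SeqContT (a b : ℝ) (F : (ℝ → ℝ → ℝ) → ℝ) : Prop :=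
  ∀ (φn : ℕ → ℝ → ℝ → ℝ) (φ : ℝ → ℝ → ℝ),
    (∀ n, IsDynTest a b (φn n)) → IsDynTest a b φ → TendstoT a b φn φ →
      Filter.Tendsto (fun n => F (φn n)) Filter.atTop (nhds (F φ))

/-- the regular distribution `(f, φ) = ∫_I f(t) φ̂(t) dt` associated to a
measurable, locally bounded function `f` on `I` is a `𝒯`-sequentially continuous
functional (here `φ̂(t) = φ(t)(0)`, which agrees a.e. with the ordinary part of `φ`). -/
theorem stmt_12 (a b : ℝ) (f : ℝ → ℝ)
    (hmf : AEMeasurable f (MeasureTheory.volume.restrict (Set.Ioo a b)))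
    (hbf : ∀ c d : ℝ, Set.Icc c d ⊆ Set.Ioo a b → ∃ M, ∀ t ∈ Set.Icc c d, |f t| ≤ M)
    (φn : ℕ → ℝ → ℝ → ℝ) (φ : ℝ → ℝ → ℝ)
    (hφn : ∀ n, IsDynTest a b (φn n)) (hφ : IsDynTest a b φ)
    (hmn : ∀ n, AEMeasurable (fun t => φn n t 0)
      (MeasureTheory.volume.restrict (Set.Ioo a b)))
    (hm : AEMeasurable (fun t => φ t 0) (MeasureTheory.volume.restrict (Set.Ioo a b)))
    (hconv : TendstoT a b φn φ) :
    Filter.Tendsto (fun n => ∫ t in Set.Ioo a b, f t * φn n t 0) Filter.atTop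
      (nhds (∫ t in Set.Ioo a b, f t * φ t 0)) := by
  obtain ⟨⟨c, d, hac, hcd, hdb, hsupp⟩, hunif⟩ := hconv
  obtain ⟨Mφ, hMφ⟩ := hφ.1
  have h0J : (0:ℝ) ∈ Jset := by constructor <;> norm_num [Jset]
  obtain ⟨M, hM⟩ := hbf c d (fun t ht => ⟨lt_of_lt_of_le hac ht.1, lt_of_le_of_lt ht.2 hdb⟩)
  have hM0 : 0 ≤ M := le_trans (abs_nonneg _) (hM c ⟨le_refl c, hcd⟩)
  apply MeasureTheory.tendsto_integral_filter_of_dominated_convergence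
    (Set.indicator (Set.Icc c d) (fun _ => M * (Mφ + 1)))
  · exact Filter.Eventually.of_forall fun n => (hmf.mul (hmn n)).aestronglyMeasurable
  · obtain ⟨N, hN⟩ := hunif 1 one_pos
    filter_upwards [Filter.eventually_ge_atTop N] with n hn
    rw [MeasureTheory.ae_restrict_iff' measurableSet_Ioo]
    filter_upwards with t ht
    by_cases htc : t ∈ Set.Icc c d
    · have h1 : |φn n t 0| ≤ Mφ + 1 := by
        have h2 := hN n hn t ht 0 h0J
        have h3 := hMφ t ht 0 h0J
        calc |φn n t 0| = |(φn n t 0 - φ t 0) + φ t 0| := by ring_nf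
          _ ≤ |φn n t 0 - φ t 0| + |φ t 0| := abs_add_le _ _
          _ ≤ Mφ + 1 := by linarith
      rw [Set.indicator_of_mem htc]
      calc ‖f t * φn n t 0‖ = |f t| * |φn n t 0| := abs_mul _ _
        _ ≤ M * (Mφ + 1) := mul_le_mul (hM t htc) h1 (abs_nonneg _) hM0
    · rw [Set.indicator_of_notMem htc, hsupp n t htc 0 h0J]
      simp
  · rw [MeasureTheory.integrable_indicator_iff measurableSet_Icc]
    refine (MeasureTheory.integrableOn_const_iff (C := M * (Mφ + 1))).mpr (Or.inr ?_)
    rw [MeasureTheory.Measure.restrict_apply measurableSet_Icc]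
    exact lt_of_le_of_lt (measure_mono Set.inter_subset_left) measure_Icc_lt_top
  · rw [MeasureTheory.ae_restrict_iff' measurableSet_Ioo]
    filter_upwards with t ht
    refine Filter.Tendsto.const_mul _ ?_
    rw [Metric.tendsto_atTop]
    intro ε hε
    obtain ⟨N, hN⟩ := hunif ε hε
    exact ⟨N, fun n hn => by rw [Real.dist_eq]; exact hN n hn t ht 0 h0J⟩
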